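/- Let f_{j,i} : ℝⁿ → ℝ for j ∈ {1,…,m}, i ∈ {1,…,p} be continuously differentiable, and set Φ_j(x) = max_i f_{j,i}(x), Φ(x) = (Φ_1(x),…,Φ_m(x)). If x* is a weak Pareto optimal point of Φ (there is no x with Φ_j(x) < Φ_j(x*) for all j), then x* is a critical point: for every direction t ∈ ℝⁿ there exist j and an active index i ∈ I_j(x*) = {i : f_{j,i}(x*) = Φ_j(x*)} with ∇f_{j,i}(x*)ᵀt ≥ 0. -/

import Mathlib

open RealInnerProductSpace Filter

theorem stmt_2 {n m p : ℕ} [NeZero p]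
    (f : Fin m → Fin p → EuclideanSpace ℝ (Fin n) → ℝ)
    (hf : ∀ j i, ContDiff ℝ 1 (f j i))
    (Φ : Fin m → EuclideanSpace ℝ (Fin n) → ℝ)
    (hΦ : ∀ j x, Φ j x = Finset.univ.sup' Finset.univ_nonempty (fun i => f j i x))
    (xstar : EuclideanSpace ℝ (Fin n))
    (hweak : ¬ ∃ x, ∀ j, Φ j x < Φ j xstar) :
    ∀ t : EuclideanSpace ℝ (Fin n), ∃ j i,
      f j i xstar = Φ j xstar ∧ 0 ≤ ⟪gradient (f j i) xstar, t⟫ := by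
  intro t
  by_contra h
  push_neg at h
  apply hweak
  have hline : ∀ s : ℝ, HasDerivAt (fun s : ℝ => xstar + s • t) t s := by
    intro s
    simpa using ((hasDerivAt_id s).smul_const t).const_add xstar
  have key : ∀ j i, ∀ᶠ s in nhdsWithin (0:ℝ) (Set.Ioi 0),
      f j i (xstar + s • t) < Φ j xstar := by
    intro j i
    by_cases hact : f j i xstar = Φ j xstar
    · have hdiff : DifferentiableAt ℝ (f j i) xstar :=
        ((hf j i).differentiable one_ne_zero).differentiableAt
      have hgrad := hdiff.hasGradientAt
      have hgrad' : HasFDerivAt (f j i)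
          ((InnerProductSpace.toDual ℝ (EuclideanSpace ℝ (Fin n))) (gradient (f j i) xstar))
          (xstar + (0:ℝ) • t) := by
        simp only [zero_smul, add_zero]; exact hgrad.hasFDerivAt
      have hd : HasDerivAt (fun s : ℝ => f j i (xstar + s • t))
          ⟪gradient (f j i) xstar, t⟫ 0 := by
        have := hgrad'.comp_hasDerivAt 0 (hline 0)
        exact this
      have hneg := h j i hact
      have hslope : Filter.Tendsto (slope (fun s : ℝ => f j i (xstar + s • t)) 0)
          (nhdsWithin (0:ℝ) (Set.Ioi 0)) (nhds ⟪gradient (f j i) xstar, t⟫) :=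
        (hasDerivAt_iff_tendsto_slope.mp hd).mono_left
          (nhdsWithin_mono 0 (fun s hs => ne_of_gt hs))
      have hev : ∀ᶠ s in nhdsWithin (0:ℝ) (Set.Ioi 0),
          slope (fun s : ℝ => f j i (xstar + s • t)) 0 s < 0 :=
        hslope.eventually (gt_mem_nhds hneg)
      filter_upwards [hev, self_mem_nhdsWithin] with s hs hs0
      rw [slope_def_field] at hs
      have hspos : (0:ℝ) < s := hs0
      have h1 : f j i (xstar + s • t) < f j i (xstar + (0:ℝ) • t) := by
        rcases div_neg_iff.mp hs with h' | h'
        · linarith [h'.1]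
        · linarith [h'.2]
      have h2 : f j i (xstar + s • t) < f j i xstar := by
        simpa using h1
      calc f j i (xstar + s • t) < f j i xstar := h2
        _ = Φ j xstar := hact
    · have hle : f j i xstar ≤ Φ j xstar := by
        rw [hΦ]; exact Finset.le_sup' (fun i => f j i xstar) (Finset.mem_univ i)
      have hlt : f j i xstar < Φ j xstar := lt_of_le_of_ne hle hact
      have hcont : ContinuousAt (fun s : ℝ => f j i (xstar + s • t)) 0 := by
        exact ((hf j i).continuous.comp (by continuity)).continuousAt
      have hev : ∀ᶠ s in nhds (0:ℝ), f j i (xstar + s • t) < Φ j xstar := by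
        have : f j i (xstar + (0:ℝ) • t) < Φ j xstar := by simpa using hlt
        exact hcont.eventually_lt continuousAt_const this
      exact hev.filter_mono nhdsWithin_le_nhds
  have hall : ∀ᶠ s in nhdsWithin (0:ℝ) (Set.Ioi 0),
      ∀ j i, f j i (xstar + s • t) < Φ j xstar :=
    eventually_all.2 fun j => eventually_all.2 fun i => key j i
  obtain ⟨s, hs⟩ := hall.exists
  refine ⟨xstar + s • t, fun j => ?_⟩
  rw [hΦ]
  exact (Finset.sup'_lt_iff _).2 fun i _ => hs j i
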